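/- Let E, J, R ∈ ℂ^{n×n} with E = E^H ⪰ 0, J = -J^H, R = R^H ⪰ 0, and suppose det(λ₀ E - (J - R)) ≠ 0 for some λ₀ ∈ ℂ (the pencil λE - (J-R) is regular). If λ ∈ ℂ is a finite eigenvalue of the pencil, i.e. det(λ E - (J - R)) = 0, then Re(λ) ≤ 0. -/

import Mathlib

open Matrix
open scoped ComplexOrder

/-- For a regular semi-dissipative Hamiltonian pencil `λE - (J - R)` with `E ⪰ 0`
Hermitian, `J` skew-Hermitian and `R ⪰ 0` Hermitian, every finite eigenvalue `λ`
(i.e. `det(λE - (J - R)) = 0`) satisfies `Re λ ≤ 0`. -/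
theorem stmt_17 (n : ℕ) (E J R : Matrix (Fin n) (Fin n) ℂ)
    (hE : E.PosSemidef) (hJ : Jᴴ = -J) (hR : R.PosSemidef)
    (hreg : ∃ lam₀ : ℂ, (lam₀ • E - (J - R)).det ≠ 0) :
    ∀ lam : ℂ, (lam • E - (J - R)).det = 0 → lam.re ≤ 0 := by
  intro lam hdet
  obtain ⟨v, hv0, hv⟩ := (Matrix.exists_mulVec_eq_zero_iff).mpr hdet
  obtain ⟨lam₀, hreg⟩ := hreg
  have hvec : lam • (E *ᵥ v) = (J - R) *ᵥ v := by
    rw [sub_mulVec, smul_mulVec] at hv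
    exact sub_eq_zero.mp hv
  set a : ℂ := star v ⬝ᵥ (E *ᵥ v) with ha
  have hanneg : 0 ≤ a := hE.dotProduct_mulVec_nonneg v
  have haim : a.im = 0 := by
    have := Complex.le_def.mp hanneg
    simpa using this.2.symm
  have hare : 0 ≤ a.re := by
    have := Complex.le_def.mp hanneg
    simpa using this.1
  by_cases hE0 : E *ᵥ v = 0
  · -- then (J - R) *ᵥ v = 0, contradicting regularity
    have hJR : (J - R) *ᵥ v = 0 := by rw [← hvec, hE0, smul_zero]
    exfalso
    apply hreg
    rw [← Matrix.exists_mulVec_eq_zero_iff]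
    exact ⟨v, hv0, by rw [sub_mulVec, smul_mulVec, hE0, hJR, smul_zero, sub_zero]⟩
  · have ha0 : a ≠ 0 := fun h => hE0 ((hE.dotProduct_mulVec_zero_iff v).mp h)
    have harepos : 0 < a.re := by
      rcases lt_or_eq_of_le hare with h | h
      · exact h
      · exact absurd (Complex.ext (h.symm) haim) ha0
    -- scalar equation
    have heq : lam * a = star v ⬝ᵥ (J *ᵥ v) - star v ⬝ᵥ (R *ᵥ v) := by
      have : star v ⬝ᵥ (lam • (E *ᵥ v)) = star v ⬝ᵥ ((J - R) *ᵥ v) := by rw [hvec]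
      rw [dotProduct_smul, sub_mulVec, dotProduct_sub] at this
      simpa [smul_eq_mul, ha] using this
    set j : ℂ := star v ⬝ᵥ (J *ᵥ v) with hj
    set r : ℂ := star v ⬝ᵥ (R *ᵥ v) with hr
    have hrnneg : 0 ≤ r := hR.dotProduct_mulVec_nonneg v
    have hrre : 0 ≤ r.re := by
      have := Complex.le_def.mp hrnneg
      simpa using this.1
    have hjstar : star j = -j := by
      have h1 : j = star (star (J *ᵥ v) ⬝ᵥ v) := star_dotProduct _ _
      have h2 : star j = star (J *ᵥ v) ⬝ᵥ v := by rw [h1, star_star]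
      rw [star_mulVec, ← dotProduct_mulVec, hJ] at h2
      simpa [neg_mulVec, hj] using h2
    have hjre : j.re = 0 := by
      have := congrArg Complex.re hjstar
      simp only [Complex.neg_re] at this
      have h3 : (star j).re = j.re := Complex.conj_re j
      linarith [h3 ▸ this]
    -- take real parts
    have hre : lam.re * a.re = -r.re := by
      have := congrArg Complex.re heq
      simp only [Complex.mul_re, Complex.sub_re, haim, mul_zero, sub_zero, hjre,
        zero_sub] at this
      exact this
    nlinarith
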